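/- Let P be a Polish space which is a topological group (with continuous multiplication and inversion), equipped with its Borel σ-algebra. Let A ⊆ P be a Borel set, n a natural number, and I ⊆ Fin n. Then the set A_I = {x : Fin n → P | ∃ g₁ g₂ : P, ∀ i : Fin n, (g₁⁻¹ * (x i) * g₂⁻¹ ∈ A ↔ i ∈ I)} is an analytic subset of the product space Fin n → P (with the product topology). -/

import Mathlib

open MeasureTheory

/-- For a Polish topological group `P`, a Borel set `A ⊆ P`, `n : ℕ` and
`I ⊆ Fin n`, the set `{x : Fin n → P | ∃ g₁ g₂, ∀ i, g₁⁻¹ * x i * g₂⁻¹ ∈ A ↔ i ∈ I}`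
is analytic in the product space. -/
theorem stmt_8 {P : Type*} [TopologicalSpace P] [PolishSpace P] [Group P]
    [IsTopologicalGroup P] [MeasurableSpace P] [BorelSpace P]
    (A : Set P) (hA : MeasurableSet A) (n : ℕ) (I : Set (Fin n)) :
    MeasureTheory.AnalyticSet
      {x : Fin n → P | ∃ g₁ g₂ : P, ∀ i : Fin n, (g₁⁻¹ * x i * g₂⁻¹ ∈ A ↔ i ∈ I)} := by
  classical
  set B : Set ((Fin n → P) × P × P) :=
    {p | ∀ i : Fin n, (p.2.1⁻¹ * p.1 i * p.2.2⁻¹ ∈ A ↔ i ∈ I)} with hB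
  have hBmeas : MeasurableSet B := by
    have : B = ⋂ i : Fin n,
        {p : (Fin n → P) × P × P | (p.2.1⁻¹ * p.1 i * p.2.2⁻¹ ∈ A ↔ i ∈ I)} := by
      ext p; simp [hB]
    rw [this]
    refine MeasurableSet.iInter fun i => ?_
    have hm : Measurable fun p : (Fin n → P) × P × P =>
        p.2.1⁻¹ * p.1 i * p.2.2⁻¹ :=
      ((measurable_snd.fst.inv.mul ((measurable_pi_apply i).comp measurable_fst)).mul
        measurable_snd.snd.inv)
    by_cases hi : i ∈ I
    · simp only [hi, iff_true]; exact hm hA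
    · simp only [hi, iff_false]; exact (hm hA).compl
  have himg : {x : Fin n → P | ∃ g₁ g₂ : P, ∀ i : Fin n,
      (g₁⁻¹ * x i * g₂⁻¹ ∈ A ↔ i ∈ I)} = Prod.fst '' B := by
    ext x
    simp only [Set.mem_image, Set.mem_setOf_eq, hB, Prod.exists]
    constructor
    · rintro ⟨g₁, g₂, h⟩; exact ⟨x, g₁, g₂, h, rfl⟩
    · rintro ⟨y, g₁, g₂, h, rfl⟩; exact ⟨g₁, g₂, h⟩
  rw [himg]
  exact hBmeas.analyticSet_image measurable_fst
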